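/- For every pair of functions ν, μ : S → ℝ and every constant C ∈ ℝ, the objective L̃ is invariant under the simultaneous constant shift ν ↦ ν + C/(1−γ) and μ ↦ μ + C; that is, L̃(ν + (C/(1−γ))·𝟙, μ + C·𝟙) = L̃(ν, μ), where 𝟙 denotes the all-ones function on S. -/
import Mathlib


open scoped BigOperators

noncomputable def eFn {S A : Type*} [Fintype S] (γ : ℝ) (T : S → A → S → ℝ)
    (ν μ : S → ℝ) (s : S) (a : A) : ℝ :=
  μ s + γ * ∑ s', T s a s' * ν s' - ν s

noncomputable def Ltilde {S A : Type*} [Fintype S] [Fintype A] (γ : ℝ) (p0 : S → ℝ)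
    (T : S → A → S → ℝ) (dD : S → A → ℝ) (α : ℝ) (φ : ℝ → ℝ) (ν μ : S → ℝ) : ℝ :=
  (1 - γ) * ∑ s, p0 s * ν s
    + ∑ s, ∑ a, dD s a * (α * φ (eFn γ T ν μ s a / α))
    + Real.log (∑ s, Real.exp (-μ s))

theorem stmt0 {S A : Type*} [Fintype S] [Fintype A] [Nonempty S] [Nonempty A]
    (γ : ℝ) (hγ : γ ∈ Set.Ioo (0:ℝ) 1)
    (p0 : S → ℝ) (hp0 : ∀ s, 0 ≤ p0 s) (hp0sum : ∑ s, p0 s = 1)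
    (T : S → A → S → ℝ) (hT : ∀ s a s', 0 ≤ T s a s')
    (hTsum : ∀ s a, ∑ s', T s a s' = 1)
    (dD : S → A → ℝ) (hdD : ∀ s a, 0 ≤ dD s a) (hdDsum : ∑ s, ∑ a, dD s a = 1)
    (α : ℝ) (hα : 0 < α) (φ : ℝ → ℝ)
    (ν μ : S → ℝ) (C : ℝ) :
    Ltilde γ p0 T dD α φ (fun s => ν s + C / (1 - γ)) (fun s => μ s + C)
      = Ltilde γ p0 T dD α φ ν μ := by
  have hγ1 : (1 - γ) ≠ 0 := by
    have := hγ.2; linarith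
  have heFn : ∀ s a, eFn γ T (fun s => ν s + C / (1 - γ)) (fun s => μ s + C) s a
      = eFn γ T ν μ s a := by
    intro s a
    unfold eFn
    have h1 : ∑ s', T s a s' * (ν s' + C / (1 - γ))
        = (∑ s', T s a s' * ν s') + C / (1 - γ) := by
      simp only [mul_add, Finset.sum_add_distrib, ← Finset.sum_mul, hTsum s a, one_mul]
    rw [h1]
    field_simp
    ring
  have hterm1 : (1 - γ) * ∑ s, p0 s * (ν s + C / (1 - γ))
      = (1 - γ) * (∑ s, p0 s * ν s) + C := by
    have h3 : ∑ s, p0 s * (ν s + C / (1 - γ))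
        = (∑ s, p0 s * ν s) + C / (1 - γ) := by
      simp only [mul_add, Finset.sum_add_distrib, ← Finset.sum_mul, hp0sum, one_mul]
    rw [h3, mul_add, mul_div_cancel₀ _ hγ1]
  have hlog : Real.log (∑ s, Real.exp (-(μ s + C)))
      = Real.log (∑ s, Real.exp (-μ s)) - C := by
    have h2 : ∑ s : S, Real.exp (-(μ s + C))
        = Real.exp (-C) * ∑ s, Real.exp (-μ s) := by
      rw [Finset.mul_sum]
      congr 1; ext s
      rw [← Real.exp_add]; ring_nf
    have hpos : 0 < ∑ s : S, Real.exp (-μ s) :=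
      Finset.sum_pos (fun s _ => Real.exp_pos _) Finset.univ_nonempty
    rw [h2, Real.log_mul (Real.exp_ne_zero _) (ne_of_gt hpos), Real.log_exp]
    ring
  unfold Ltilde
  simp only [heFn, hterm1, hlog]
  ring
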